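/- Let (E,g) and (F,d) be Fréchet spaces with translation-invariant metrics, with d a standard metric (translation-invariant with absolutely convex balls). Then D_{g,d}(L,H) := ‖L−H‖_{g,d} defines a translation-invariant metric on the space L_{g,d}(E,F) of linear maps L : E → F with ‖L‖_{g,d} < ∞, making it an Abelian topological group under addition. -/
import Mathlib

open Metric

/-- The set of ratios whose supremum is the operator quantity `‖L‖_{g,d}`. -/
def opRatios {E F : Type*} [AddCommGroup E] [Module ℝ E] [MetricSpace E]
    [AddCommGroup F] [Module ℝ F] [MetricSpace F] (L : E →ₗ[ℝ] F) : Set ℝ :=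
  { r | ∃ x : E, x ≠ 0 ∧ r = dist (L x) 0 / dist x 0 }

/-- `‖L‖_{g,d} = sup_{x ≠ 0} dist (L x) 0 / dist x 0`. -/
noncomputable def opN {E F : Type*} [AddCommGroup E] [Module ℝ E] [MetricSpace E]
    [AddCommGroup F] [Module ℝ F] [MetricSpace F] (L : E →ₗ[ℝ] F) : ℝ :=
  sSup (opRatios L)

section helpers

variable {E F : Type*} [AddCommGroup E] [Module ℝ E] [MetricSpace E]
    [AddCommGroup F] [Module ℝ F] [MetricSpace F]

lemma ratios_nonneg (L : E →ₗ[ℝ] F) : ∀ r ∈ opRatios L, 0 ≤ r := by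
  rintro r ⟨x, hx, rfl⟩
  positivity

lemma opN_nonneg (L : E →ₗ[ℝ] F) : 0 ≤ opN L :=
  Real.sSup_nonneg (ratios_nonneg L)

lemma dist_neg_zero' (hgF : ∀ x y z : F, dist (x + z) (y + z) = dist x y)
    (y : F) : dist (-y) 0 = dist y 0 := by
  have := hgF (-y) 0 y
  simpa [dist_comm] using this.symm

lemma opRatios_neg (hgF : ∀ x y z : F, dist (x + z) (y + z) = dist x y)
    (L : E →ₗ[ℝ] F) : opRatios (-L) = opRatios L := by
  ext r
  constructor <;> rintro ⟨x, hx, rfl⟩ <;>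
    exact ⟨x, hx, by simp [dist_neg_zero' hgF]⟩

lemma opN_neg (hgF : ∀ x y z : F, dist (x + z) (y + z) = dist x y)
    (L : E →ₗ[ℝ] F) : opN (-L) = opN L := by
  unfold opN; rw [opRatios_neg hgF]

lemma opN_sub_symm (hgF : ∀ x y z : F, dist (x + z) (y + z) = dist x y)
    (L H : E →ₗ[ℝ] F) : opN (L - H) = opN (H - L) := by
  rw [← opN_neg hgF (L - H), neg_sub]

lemma ratio_add_le (hgF : ∀ x y z : F, dist (x + z) (y + z) = dist x y)
    (L H : E →ₗ[ℝ] F) (hL : BddAbove (opRatios L)) (hH : BddAbove (opRatios H)) :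
    ∀ r ∈ opRatios (L + H), r ≤ opN L + opN H := by
  rintro r ⟨x, hx, rfl⟩
  have hxpos : 0 < dist x 0 := dist_pos.mpr hx
  have h1 : dist ((L + H) x) 0 ≤ dist (L x) 0 + dist (H x) 0 := by
    have h2 := hgF (L x) 0 (H x)
    calc dist ((L + H) x) 0 = dist (L x + H x) 0 := by simp
      _ ≤ dist (L x + H x) (H x) + dist (H x) 0 := dist_triangle _ _ _
      _ = dist (L x) 0 + dist (H x) 0 := by rw [← h2]; simp
  calc dist ((L + H) x) 0 / dist x 0
      ≤ (dist (L x) 0 + dist (H x) 0) / dist x 0 := by gcongr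
    _ = dist (L x) 0 / dist x 0 + dist (H x) 0 / dist x 0 := add_div _ _ _
    _ ≤ opN L + opN H :=
        add_le_add (le_csSup hL ⟨x, hx, rfl⟩) (le_csSup hH ⟨x, hx, rfl⟩)

lemma bdd_add (hgF : ∀ x y z : F, dist (x + z) (y + z) = dist x y)
    (L H : E →ₗ[ℝ] F) (hL : BddAbove (opRatios L)) (hH : BddAbove (opRatios H)) :
    BddAbove (opRatios (L + H)) :=
  ⟨opN L + opN H, ratio_add_le hgF L H hL hH⟩

lemma bdd_neg (hgF : ∀ x y z : F, dist (x + z) (y + z) = dist x y)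
    (L : E →ₗ[ℝ] F) (hL : BddAbove (opRatios L)) : BddAbove (opRatios (-L)) := by
  rwa [opRatios_neg hgF]

lemma bdd_sub (hgF : ∀ x y z : F, dist (x + z) (y + z) = dist x y)
    (L H : E →ₗ[ℝ] F) (hL : BddAbove (opRatios L)) (hH : BddAbove (opRatios H)) :
    BddAbove (opRatios (L - H)) := by
  rw [sub_eq_add_neg]
  exact bdd_add hgF L (-H) hL (bdd_neg hgF H hH)

lemma opN_add_le (hgF : ∀ x y z : F, dist (x + z) (y + z) = dist x y)
    (L H : E →ₗ[ℝ] F) (hL : BddAbove (opRatios L)) (hH : BddAbove (opRatios H)) :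
    opN (L + H) ≤ opN L + opN H :=
  Real.sSup_le (ratio_add_le hgF L H hL hH) (add_nonneg (opN_nonneg L) (opN_nonneg H))

lemma opN_zero : opN (0 : E →ₗ[ℝ] F) = 0 := by
  apply le_antisymm
  · apply Real.sSup_le _ le_rfl
    rintro r ⟨x, hx, rfl⟩
    simp
  · exact opN_nonneg 0

lemma opN_eq_zero_iff (K : E →ₗ[ℝ] F) (hK : BddAbove (opRatios K)) :
    opN K = 0 ↔ K = 0 := by
  constructor
  · intro h
    ext x
    rcases eq_or_ne x 0 with rfl | hx
    · simp
    · have hratio : dist (K x) 0 / dist x 0 ≤ 0 := by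
        rw [← h]; exact le_csSup hK ⟨x, hx, rfl⟩
      have hzero : dist (K x) 0 / dist x 0 = 0 :=
        le_antisymm hratio (by positivity)
      have hxpos : 0 < dist x 0 := dist_pos.mpr hx
      have : dist (K x) 0 = 0 :=
        (div_eq_zero_iff.mp hzero).resolve_right (ne_of_gt hxpos)
      simpa [dist_eq_zero] using this
  · rintro rfl; exact opN_zero

end helpers

theorem stmt3 {E F : Type*} [AddCommGroup E] [Module ℝ E] [MetricSpace E] [CompleteSpace E]
    [AddCommGroup F] [Module ℝ F] [MetricSpace F] [CompleteSpace F]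
    (hgE : ∀ x y z : E, dist (x + z) (y + z) = dist x y)
    (hgF : ∀ x y z : F, dist (x + z) (y + z) = dist x y)
    (hball : ∀ r : ℝ, 0 < r → Convex ℝ (Metric.ball (0 : F) r) ∧ Balanced ℝ (Metric.ball (0 : F) r))
    (S : Set (E →ₗ[ℝ] F)) (hS : S = { L | BddAbove (opRatios L) })
    (D : (E →ₗ[ℝ] F) → (E →ₗ[ℝ] F) → ℝ) (hD : ∀ L H, D L H = opN (L - H)) :
    -- subgroup
    ((0 : E →ₗ[ℝ] F) ∈ S ∧ (∀ L ∈ S, ∀ H ∈ S, L + H ∈ S) ∧ (∀ L ∈ S, -L ∈ S)) ∧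
    -- metric axioms
    (∀ L ∈ S, ∀ H ∈ S, 0 ≤ D L H) ∧
    (∀ L ∈ S, ∀ H ∈ S, D L H = D H L) ∧
    (∀ L ∈ S, ∀ H ∈ S, (D L H = 0 ↔ L = H)) ∧
    (∀ L ∈ S, ∀ H ∈ S, ∀ K ∈ S, D L K ≤ D L H + D H K) ∧
    -- translation invariance
    (∀ L ∈ S, ∀ H ∈ S, ∀ K ∈ S, D (L + K) (H + K) = D L H) ∧
    -- continuity of addition
    (∀ L ∈ S, ∀ H ∈ S, ∀ ε : ℝ, 0 < ε → ∃ δ : ℝ, 0 < δ ∧ ∀ L' ∈ S, ∀ H' ∈ S,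
      D L L' < δ → D H H' < δ → D (L + H) (L' + H') < ε) ∧
    -- negation is isometric (hence continuous)
    (∀ L ∈ S, ∀ H ∈ S, D (-L) (-H) = D L H) := by
  subst hS
  simp only [Set.mem_setOf_eq]
  refine ⟨⟨?_, ?_, ?_⟩, ?_, ?_, ?_, ?_, ?_, ?_, ?_⟩
  · -- 0 ∈ S
    refine ⟨0, ?_⟩
    rintro r ⟨x, hx, rfl⟩
    simp
  · -- closed under addition
    exact fun L hL H hH => bdd_add hgF L H hL hH
  · -- closed under negation
    exact fun L hL => bdd_neg hgF L hL
  · -- nonneg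
    intro L _ H _; rw [hD]; exact opN_nonneg _
  · -- symmetry
    intro L _ H _; rw [hD, hD]; exact opN_sub_symm hgF L H
  · -- D = 0 iff eq
    intro L hL H hH
    rw [hD, opN_eq_zero_iff _ (bdd_sub hgF L H hL hH), sub_eq_zero]
  · -- triangle
    intro L hL H hH K hK
    rw [hD, hD, hD]
    have : L - K = (L - H) + (H - K) := by abel
    rw [this]
    exact opN_add_le hgF _ _ (bdd_sub hgF L H hL hH) (bdd_sub hgF H K hH hK)
  · -- translation invariance
    intro L _ H _ K _
    rw [hD, hD]
    congr 1
    abel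
  · -- continuity of addition
    intro L hL H hH ε hε
    refine ⟨ε / 2, by linarith, fun L' hL' H' hH' h1 h2 => ?_⟩
    rw [hD] at h1 h2 ⊢
    have heq : L + H - (L' + H') = (L - L') + (H - H') := by abel
    rw [heq]
    have := opN_add_le hgF _ _ (bdd_sub hgF L L' hL hL') (bdd_sub hgF H H' hH hH')
    linarith
  · -- negation isometric
    intro L _ H _
    rw [hD, hD]
    have : -L - -H = -(L - H) := by abel
    rw [this, opN_neg hgF]
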